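/- Let a < b be positive numbers and f(x₁,x₂) = a(x₁−1)² + b(x₂−1)² with sparsity level s = 1. Then x̃ = (1,0) is a basic feasible vector which is an L-stationary point for every L ≥ L(f) = 2b, even though the unique optimal solution is (0,1). -/

import Mathlib

noncomputable section
open scoped RealInnerProductSpace

/-- the number of nonzero components of `x` -/
def norm0 {n : ℕ} (x : EuclideanSpace ℝ (Fin n)) : ℕ :=
  (Finset.univ.filter fun i => x i ≠ 0).card

/-- the sparsity constraint set `C_s` -/
def Cs (n s : ℕ) : Set (EuclideanSpace ℝ (Fin n)) := {x | norm0 x ≤ s}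

/-- the set-valued Euclidean projection onto `Cs n s` -/
def projCs (n s : ℕ) (w : EuclideanSpace ℝ (Fin n)) : Set (EuclideanSpace ℝ (Fin n)) :=
  {y | y ∈ Cs n s ∧ ∀ z ∈ Cs n s, ‖y - w‖ ≤ ‖z - w‖}

/-- the s-th largest absolute value of a component of `x` -/
def Msval {n : ℕ} (s : ℕ) (x : EuclideanSpace ℝ (Fin n)) : ℝ :=
  (((List.ofFn fun i => |x i|).mergeSort (· ≥ ·)).getD (s - 1) 0)


private abbrev E19 := EuclideanSpace ℝ (Fin 2)

private lemma grad_eq19 (a b : ℝ) (f : E19 → ℝ)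
    (hfdef : ∀ x, f x = a * (x 0 - 1) ^ 2 + b * (x 1 - 1) ^ 2) (x : E19) :
    gradient f x = (WithLp.equiv 2 (Fin 2 → ℝ)).symm ![2*a*(x 0 - 1), 2*b*(x 1 - 1)] := by
  have h0 : HasFDerivAt (fun y : E19 => y 0) (EuclideanSpace.proj (0 : Fin 2) : E19 →L[ℝ] ℝ) x :=
    by simpa using (EuclideanSpace.proj (0 : Fin 2) : E19 →L[ℝ] ℝ).hasFDerivAt
  have h1 : HasFDerivAt (fun y : E19 => y 1) (EuclideanSpace.proj (1 : Fin 2) : E19 →L[ℝ] ℝ) x :=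
    by simpa using (EuclideanSpace.proj (1 : Fin 2) : E19 →L[ℝ] ℝ).hasFDerivAt
  have u0 := h0.sub_const 1
  have u1 := h1.sub_const 1
  have hf := ((u0.mul u0).const_mul a).add ((u1.mul u1).const_mul b)
  have hf' : HasFDerivAt f
      (a • ((x 0 - 1) • (EuclideanSpace.proj (0:Fin 2) : E19 →L[ℝ] ℝ) + (x 0 - 1) • EuclideanSpace.proj 0) +
        b • ((x 1 - 1) • (EuclideanSpace.proj (1:Fin 2) : E19 →L[ℝ] ℝ) + (x 1 - 1) • EuclideanSpace.proj 1)) x :=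
    hf.congr_of_eventuallyEq (Filter.Eventually.of_forall fun y => by rw [hfdef]; simp only [Pi.add_apply, Pi.mul_apply]; ring)
  have hg : HasGradientAt f
      ((WithLp.equiv 2 (Fin 2 → ℝ)).symm ![2*a*(x 0 - 1), 2*b*(x 1 - 1)]) x := by
    rw [hasGradientAt_iff_hasFDerivAt]
    refine hf'.congr_fderiv ?_
    ext y
    simp [InnerProductSpace.toDual_apply_apply, PiLp.inner_apply, Fin.sum_univ_two,
      RCLike.inner_apply]
    ring
  exact hg.gradient

def xt19 : EuclideanSpace ℝ (Fin 2) := (WithLp.equiv 2 (Fin 2 → ℝ)).symm ![1, 0]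
def xopt19 : EuclideanSpace ℝ (Fin 2) := (WithLp.equiv 2 (Fin 2 → ℝ)).symm ![0, 1]

/-- For f(x₁,x₂) = a(x₁-1)² + b(x₂-1)² with 0 < a < b and s = 1, the point (1,0) is a BF
vector which is L-stationary for every L ≥ L(f) = 2b, although (0,1) is the unique optimum. -/
theorem stmt19 (a b : ℝ) (ha : 0 < a) (hab : a < b)
    (f : EuclideanSpace ℝ (Fin 2) → ℝ)
    (hfdef : ∀ x, f x = a * (x 0 - 1) ^ 2 + b * (x 1 - 1) ^ 2) :
    (∀ x y, ‖gradient f x - gradient f y‖ ≤ 2 * b * ‖x - y‖) ∧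
    (norm0 xt19 ≤ 1 ∧ ∀ i, xt19 i ≠ 0 → gradient f xt19 i = 0) ∧
    (∀ L : ℝ, 2 * b ≤ L →
      ∀ i, (xt19 i = 0 → |gradient f xt19 i| ≤ L * Msval 1 xt19) ∧
        (xt19 i ≠ 0 → gradient f xt19 i = 0)) ∧
    (∀ x ∈ Cs 2 1, f xopt19 ≤ f x) ∧
    (∀ x ∈ Cs 2 1, f x = f xopt19 → x = xopt19) := by
  have hx0 : xt19 0 = 1 := by simp [xt19]
  have hx1 : xt19 1 = 0 := by simp [xt19]
  have hb : 0 < b := lt_trans ha hab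
  have hgrad := grad_eq19 a b f hfdef
  have hgxt : ∀ i, gradient f xt19 i = ![0, -(2*b)] i := by
    intro i
    rw [hgrad]
    fin_cases i <;> simp [hx0, hx1]
  refine ⟨?_, ⟨?_, ?_⟩, ?_, ?_, ?_⟩
  · -- Lipschitz
    intro x y
    have hsub : ∀ i, (gradient f x - gradient f y) i
        = ![2*a*(x 0 - y 0), 2*b*(x 1 - y 1)] i := by
      intro i
      have : (gradient f x - gradient f y) i = gradient f x i - gradient f y i := rfl
      rw [this, hgrad, hgrad]
      fin_cases i <;> simp <;> ring
    rw [EuclideanSpace.norm_eq, EuclideanSpace.norm_eq]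
    simp only [Fin.sum_univ_two, hsub, Real.norm_eq_abs, sq_abs,
      Matrix.cons_val_zero, Matrix.cons_val_one, Matrix.head_cons]
    have h2b : (0:ℝ) ≤ 2*b := by linarith
    have hs0 : (x - y) 0 = x 0 - y 0 := rfl
    have hs1 : (x - y) 1 = x 1 - y 1 := rfl
    rw [hs0, hs1]
    rw [show 2*b*Real.sqrt ((x 0 - y 0)^2 + (x 1 - y 1)^2)
        = Real.sqrt ((2*b)^2 * ((x 0 - y 0)^2 + (x 1 - y 1)^2)) by
      rw [Real.sqrt_mul (by positivity), Real.sqrt_sq h2b]]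
    apply Real.sqrt_le_sqrt
    nlinarith [mul_nonneg (mul_nonneg (sub_nonneg.mpr hab.le) (by linarith : (0:ℝ) ≤ b + a))
      (sq_nonneg (x 0 - y 0))]
  · -- norm0 xt19 ≤ 1
    unfold norm0
    have : (Finset.univ.filter fun i => xt19 i ≠ 0) ⊆ {0} := by
      intro i hi
      simp only [Finset.mem_filter] at hi
      fin_cases i
      · simp
      · exact absurd hx1 hi.2
    calc _ ≤ ({0} : Finset (Fin 2)).card := Finset.card_le_card this
      _ = 1 := rfl
  · -- support gradient vanishes
    intro i hi
    fin_cases i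
    · rw [hgxt]; simp
    · exact absurd hx1 hi
  · -- L-stationarity
    intro L hL i
    have hMs : Msval 1 xt19 = 1 := by
      unfold Msval
      simp [hx0, hx1, List.ofFn_succ, List.mergeSort, List.merge]
    constructor
    · intro hi
      rw [hgxt, hMs]
      fin_cases i
      · simp
        linarith
      · have he : (![0, -(2*b)] : Fin 2 → ℝ) ⟨1, by norm_num⟩ = -(2*b) := rfl
        rw [he, abs_neg, abs_of_pos (by linarith : (0:ℝ) < 2*b)]
        linarith
    · intro hi
      fin_cases i
      · rw [hgxt]; simp
      · exact absurd hx1 hi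
  · -- optimality
    intro x hx
    have hcases : x 0 = 0 ∨ x 1 = 0 := by
      by_contra h
      push_neg at h
      have : (Finset.univ.filter fun i => x i ≠ 0) = Finset.univ := by
        apply Finset.filter_true_of_mem
        intro i _
        fin_cases i
        · exact h.1
        · exact h.2
      have h2 : norm0 x = 2 := by unfold norm0; rw [this]; rfl
      simp [Cs, h2] at hx
    have hopt : f xopt19 = a := by
      rw [hfdef]
      have h0 : xopt19 0 = 0 := by simp [xopt19]
      have h1 : xopt19 1 = 1 := by simp [xopt19]
      rw [h0, h1]; ring
    rw [hopt, hfdef]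
    rcases hcases with h | h
    · rw [h]; nlinarith [sq_nonneg (x 1 - 1)]
    · rw [h]; nlinarith [sq_nonneg (x 0 - 1)]
  · -- uniqueness
    intro x hx hfx
    have hcases : x 0 = 0 ∨ x 1 = 0 := by
      by_contra h
      push_neg at h
      have : (Finset.univ.filter fun i => x i ≠ 0) = Finset.univ := by
        apply Finset.filter_true_of_mem
        intro i _
        fin_cases i
        · exact h.1
        · exact h.2
      have h2 : norm0 x = 2 := by unfold norm0; rw [this]; rfl
      simp [Cs, h2] at hx
    have hopt : f xopt19 = a := by
      rw [hfdef]
      have h0 : xopt19 0 = 0 := by simp [xopt19]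
      have h1 : xopt19 1 = 1 := by simp [xopt19]
      rw [h0, h1]; ring
    rw [hopt, hfdef] at hfx
    have h0 : x 0 = 0 := by
      rcases hcases with h | h
      · exact h
      · exfalso; rw [h] at hfx; nlinarith [sq_nonneg (x 0 - 1)]
    have h1 : x 1 = 1 := by
      rw [h0] at hfx
      have : b * (x 1 - 1)^2 = 0 := by nlinarith
      have := mul_eq_zero.mp this
      rcases this with h | h
      · linarith
      · have := pow_eq_zero_iff (n := 2) (by norm_num) |>.mp h
        linarith
    ext i
    fin_cases i <;> simp [xopt19, h0, h1]
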